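/- Let G be a finite 2-group in which every element of order 2 is central and in which any two non-commuting elements generate a subgroup isomorphic to Q8. If G is non-abelian, then G is isomorphic to Q8 × (Z/2)^d for some d ≥ 0. -/

import Mathlib

lemma q8_pair : ∀ u v : QuaternionGroup 2, u*v ≠ v*u →
    (u^2 = v^2 ∧ u^2 ≠ 1 ∧ v*u*v⁻¹ = u⁻¹ ∧ (u*v)^2 = u^2 ∧ u^2*u^2 = 1 ∧
     u⁻¹*v⁻¹ = u*v ∧ u⁻¹*v⁻¹ = v*u⁻¹ ∧ v⁻¹*u⁻¹ = u*v⁻¹ ∧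
     (u*v)⁻¹*u⁻¹ = u*(u*v)⁻¹ ∧ (u*v)⁻¹*v⁻¹ = v*(u*v)⁻¹) := by decide

lemma q8_central : ∀ u w v : QuaternionGroup 2, (∀ z, z * u = u * z) → w * v ≠ v * w →
    (u = 1 ∨ u = w^2) := by decide

lemma pair_facts {G : Type*} [Group G] {g h : G} (hne : g*h ≠ h*g)
    (e : (Subgroup.closure {g, h} : Subgroup G) ≃* QuaternionGroup 2) :
    g^2 = h^2 ∧ g^2 ≠ 1 ∧ h*g*h⁻¹ = g⁻¹ ∧ (g*h)^2 = g^2 ∧ g^2*g^2 = 1 ∧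
    g⁻¹*h⁻¹ = g*h ∧ g⁻¹*h⁻¹ = h*g⁻¹ ∧ h⁻¹*g⁻¹ = g*h⁻¹ ∧
    (g*h)⁻¹*g⁻¹ = g*(g*h)⁻¹ ∧ (g*h)⁻¹*h⁻¹ = h*(g*h)⁻¹ := by
  have hg : g ∈ Subgroup.closure {g, h} := Subgroup.subset_closure (Set.mem_insert _ _)
  have hh : h ∈ Subgroup.closure {g, h} := Subgroup.subset_closure (Set.mem_insert_of_mem _ rfl)
  set H := (Subgroup.closure {g, h} : Subgroup G) with hH
  have hne' : e ⟨g, hg⟩ * e ⟨h, hh⟩ ≠ e ⟨h, hh⟩ * e ⟨g, hg⟩ := by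
    rw [← map_mul, ← map_mul]
    intro hEq
    exact hne (Subtype.ext_iff.mp (e.injective hEq))
  obtain ⟨q1, q2, q3, q4, q5, q6, q7, q8, q9, q10⟩ := q8_pair (e ⟨g, hg⟩) (e ⟨h, hh⟩) hne'
  have down : ∀ a b : H, e a = e b → ((a : G) = (b : G)) :=
    fun a b hab => congrArg _ (e.injective hab)
  refine ⟨?_, ?_, ?_, ?_, ?_, ?_, ?_, ?_, ?_, ?_⟩
  · rw [pow_two, pow_two]
    simpa using down ((⟨g,hg⟩ : H) * ⟨g,hg⟩) ((⟨h,hh⟩ : H) * ⟨h,hh⟩)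
      (by simp only [map_mul]; rw [pow_two, pow_two] at q1; exact q1)
  · intro hEq
    apply q2
    rw [← map_pow]
    have : (⟨g,hg⟩ : H)^2 = 1 := by ext; simpa using hEq
    rw [this, map_one]
  · simpa using down (⟨h,hh⟩ * ⟨g,hg⟩ * (⟨h,hh⟩ : H)⁻¹) ((⟨g,hg⟩ : H)⁻¹)
      (by simp only [map_mul, map_inv]; exact q3)
  · rw [pow_two, pow_two]
    simpa [mul_assoc] using down (((⟨g,hg⟩ : H) * ⟨h,hh⟩) * ((⟨g,hg⟩ : H) * ⟨h,hh⟩)) ((⟨g,hg⟩ : H) * ⟨g,hg⟩)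
      (by simp only [map_mul]; rw [pow_two, pow_two] at q4; exact q4)
  · rw [pow_two]
    simpa [mul_assoc] using down (((⟨g,hg⟩ : H) * ⟨g,hg⟩) * ((⟨g,hg⟩ : H) * ⟨g,hg⟩)) 1
      (by simp only [map_mul, map_one]; rw [pow_two] at q5; exact q5)
  · simpa using down ((⟨g,hg⟩ : H)⁻¹ * (⟨h,hh⟩ : H)⁻¹) ((⟨g,hg⟩ : H) * ⟨h,hh⟩)
      (by simp only [map_mul, map_inv]; exact q6)
  · simpa using down ((⟨g,hg⟩ : H)⁻¹ * (⟨h,hh⟩ : H)⁻¹) ((⟨h,hh⟩ : H) * (⟨g,hg⟩ : H)⁻¹)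
      (by simp only [map_mul, map_inv]; exact q7)
  · simpa using down ((⟨h,hh⟩ : H)⁻¹ * (⟨g,hg⟩ : H)⁻¹) ((⟨g,hg⟩ : H) * (⟨h,hh⟩ : H)⁻¹)
      (by simp only [map_mul, map_inv]; exact q8)
  · simpa using down (((⟨g,hg⟩ : H) * ⟨h,hh⟩)⁻¹ * (⟨g,hg⟩ : H)⁻¹)
      ((⟨g,hg⟩ : H) * ((⟨g,hg⟩ : H) * ⟨h,hh⟩)⁻¹) (by simp only [map_mul, map_inv]; exact q9)
  · simpa using down (((⟨g,hg⟩ : H) * ⟨h,hh⟩)⁻¹ * (⟨h,hh⟩ : H)⁻¹)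
      ((⟨h,hh⟩ : H) * ((⟨g,hg⟩ : H) * ⟨h,hh⟩)⁻¹) (by simp only [map_mul, map_inv]; exact q10)

lemma central_in_closure {G : Type*} [Group G] {g h : G} (hne : g*h ≠ h*g)
    (e : (Subgroup.closure {g, h} : Subgroup G) ≃* QuaternionGroup 2)
    {z : G} (hzH : z ∈ Subgroup.closure {g, h}) (hzc : ∀ a : G, a*z = z*a) :
    z = 1 ∨ z = g^2 := by
  have hg : g ∈ Subgroup.closure {g, h} := Subgroup.subset_closure (Set.mem_insert _ _)
  have hh : h ∈ Subgroup.closure {g, h} := Subgroup.subset_closure (Set.mem_insert_of_mem _ rfl)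
  set H := (Subgroup.closure {g, h} : Subgroup G) with hH
  have hne' : e ⟨g, hg⟩ * e ⟨h, hh⟩ ≠ e ⟨h, hh⟩ * e ⟨g, hg⟩ := by
    rw [← map_mul, ← map_mul]
    intro hEq
    exact hne (Subtype.ext_iff.mp (e.injective hEq))
  have down : ∀ a b : H, e a = e b → ((a : G) = (b : G)) :=
    fun a b hab => congrArg _ (e.injective hab)
  have hcen : ∀ q : QuaternionGroup 2, q * e ⟨z, hzH⟩ = e ⟨z, hzH⟩ * q := by
    intro q
    obtain ⟨w, rfl⟩ := e.surjective q
    rw [← map_mul, ← map_mul]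
    exact congrArg e (Subtype.ext (hzc w))
  rcases q8_central (e ⟨z, hzH⟩) (e ⟨g, hg⟩) (e ⟨h, hh⟩) hcen hne' with h1 | h1
  · exact Or.inl (by simpa using down ⟨z, hzH⟩ 1 (by rw [map_one]; exact h1))
  · exact Or.inr (down ⟨z, hzH⟩ ((⟨g,hg⟩ : H)^2) (by rw [map_pow]; exact h1))

theorem nonabelian_two_group_classification (G : Type*) [Group G] [Fintype G]
    (hp : IsPGroup 2 G)
    (h2 : ∀ g : G, orderOf g = 2 → g ∈ Subgroup.center G)
    (hQ8 : ∀ x y : G, x * y ≠ y * x →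
      Nonempty ((Subgroup.closure {x, y} : Subgroup G) ≃* QuaternionGroup 2))
    (hna : ¬ ∀ a b : G, a * b = b * a) :
    ∃ d : ℕ, Nonempty (G ≃* QuaternionGroup 2 × Multiplicative (Fin d → ZMod 2)) := by
  push_neg at hna
  obtain ⟨x, y, hxy⟩ := hna
  obtain ⟨e⟩ := hQ8 x y hxy
  have PF := fun (g h : G) (hne : g*h ≠ h*g) => pair_facts hne (hQ8 g h hne).some
  obtain ⟨hx2y2, hx2ne, hconj, hxysq, hx4, h6, h7, h8, h9, h10⟩ := PF x y hxy
  set t := x^2 with ht_def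
  have ht1 : t ≠ 1 := hx2ne
  have ht_sq : t * t = 1 := hx4
  have horder : orderOf t = 2 := by
    apply orderOf_eq_prime
    · rw [pow_two]; exact ht_sq
    · exact ht1
  have htc : t ∈ Subgroup.center G := h2 t horder
  have hy2 : y^2 = t := hx2y2.symm
  -- Lemma B
  have lemB : ∀ w g h : G, w^2 = t → g*w = w*g → h*w = w*h → g*h ≠ h*g → False := by
    intro w g h hw hgw hhw hgh
    have hne : (g*w)*h ≠ h*(g*w) := by
      intro hEq
      apply hgh
      have h1 : (g*h)*w = (h*g)*w := by
        calc (g*h)*w = g*(h*w) := mul_assoc _ _ _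
        _ = g*(w*h) := by rw [hhw]
        _ = (g*w)*h := (mul_assoc _ _ _).symm
        _ = h*(g*w) := hEq
        _ = (h*g)*w := (mul_assoc _ _ _).symm
      exact mul_right_cancel h1
    have e1 : (g*w)^2 = h^2 := (PF _ _ hne).1
    have e2 : g^2 = h^2 := (PF g h hgh).1
    have hcgw : Commute g w := hgw
    have e3 : (g*w)^2 = g^2 * t := by rw [hcgw.mul_pow, hw]
    apply ht1
    have : g^2 * t = g^2 * 1 := by rw [mul_one, ← e3, e1, ← e2]
    exact mul_left_cancel this
  -- commuting with x and y implies central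
  have hcent : ∀ g : G, g*x = x*g → g*y = y*g → g ∈ Subgroup.center G := by
    intro g hgx hgy
    rw [Subgroup.mem_center_iff]
    intro h
    by_contra hc
    have hgh : g*h ≠ h*g := fun hEq => hc hEq.symm
    have hhx : ¬ h*x = x*h := fun hhx => lemB x g h ht_def.symm hgx hhx hgh
    have hhy : ¬ h*y = y*h := fun hhy => lemB y g h hy2 hgy hhy hgh
    have c1 : h*x*h⁻¹ = x⁻¹ := (PF x h (fun hEq => hhx hEq.symm)).2.2.1
    have c2 : h*y*h⁻¹ = y⁻¹ := (PF y h (fun hEq => hhy hEq.symm)).2.2.1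
    have hcxy : h*(x*y) = (x*y)*h := by
      have key : h*(x*y)*h⁻¹ = x*y := by
        calc h*(x*y)*h⁻¹ = (h*x*h⁻¹)*(h*y*h⁻¹) := by group
        _ = x⁻¹*y⁻¹ := by rw [c1, c2]
        _ = x*y := h6
      calc h*(x*y) = (h*(x*y)*h⁻¹)*h := by group
      _ = (x*y)*h := by rw [key]
    have hgxy : g*(x*y) = (x*y)*g := by
      calc g*(x*y) = (g*x)*y := (mul_assoc _ _ _).symm
      _ = x*(g*y) := by rw [hgx, mul_assoc]
      _ = x*(y*g) := by rw [hgy]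
      _ = (x*y)*g := (mul_assoc _ _ _).symm
    exact lemB (x*y) g h hxysq hgxy hcxy hgh
  -- central elements square to 1
  have hcsq : ∀ z : G, z ∈ Subgroup.center G → z*z = 1 := by
    intro z hz
    have hzc := Subgroup.mem_center_iff.mp hz
    have hne : (z*x)*y ≠ y*(z*x) := by
      intro hEq
      apply hxy
      have : z*(x*y) = z*(y*x) := by
        calc z*(x*y) = (z*x)*y := (mul_assoc _ _ _).symm
        _ = y*(z*x) := hEq
        _ = (y*z)*x := (mul_assoc _ _ _).symm
        _ = (z*y)*x := by rw [hzc y]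
        _ = z*(y*x) := mul_assoc _ _ _
      exact mul_left_cancel this
    have e1 : (z*x)^2 = y^2 := (PF _ _ hne).1
    have hcz : Commute z x := (hzc x).symm
    have e2 : (z*x)^2 = z^2*t := by rw [hcz.mul_pow]
    have h1 : z^2 * t = 1 * t := by rw [one_mul, ← e2, e1, hy2]
    have := mul_right_cancel h1
    rwa [pow_two] at this
  -- membership facts
  have hxH : x ∈ Subgroup.closure {x, y} := Subgroup.subset_closure (Set.mem_insert _ _)
  have hyH : y ∈ Subgroup.closure {x, y} := Subgroup.subset_closure (Set.mem_insert_of_mem _ rfl)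
  have htH : t ∈ Subgroup.closure {x, y} := by rw [ht_def, pow_two]; exact mul_mem hxH hxH
  -- decomposition G = H * Z
  have hdec : ∀ g : G, ∃ (h : ↥(Subgroup.closure {x, y})) (z : ↥(Subgroup.center G)),
      g = ↑h * ↑z := by
    intro g
    by_cases hgx : g*x = x*g
    · by_cases hgy : g*y = y*g
      · exact ⟨1, ⟨g, hcent g hgx hgy⟩, by simp⟩
      · have cgy : g*y*g⁻¹ = y⁻¹ := (PF y g (fun hEq => hgy hEq.symm)).2.2.1
        have cgy' : g*y = y⁻¹*g := by
          calc g*y = (g*y*g⁻¹)*g := by group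
          _ = y⁻¹*g := by rw [cgy]
        refine ⟨⟨x, hxH⟩, ⟨x⁻¹*g, hcent _ ?_ ?_⟩, by simp⟩
        · have l : (x⁻¹*g)*x = g := by rw [mul_assoc, hgx, ← mul_assoc, inv_mul_cancel, one_mul]
          have r : x*(x⁻¹*g) = g := by rw [← mul_assoc, mul_inv_cancel, one_mul]
          rw [l, r]
        · calc (x⁻¹*g)*y = x⁻¹*(g*y) := mul_assoc _ _ _
          _ = x⁻¹*(y⁻¹*g) := by rw [cgy']
          _ = (x⁻¹*y⁻¹)*g := (mul_assoc _ _ _).symm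
          _ = (y*x⁻¹)*g := by rw [h7]
          _ = y*(x⁻¹*g) := mul_assoc _ _ _
    · have cgx : g*x*g⁻¹ = x⁻¹ := (PF x g (fun hEq => hgx hEq.symm)).2.2.1
      have cgx' : g*x = x⁻¹*g := by
        calc g*x = (g*x*g⁻¹)*g := by group
        _ = x⁻¹*g := by rw [cgx]
      by_cases hgy : g*y = y*g
      · refine ⟨⟨y, hyH⟩, ⟨y⁻¹*g, hcent _ ?_ ?_⟩, by simp⟩
        · calc (y⁻¹*g)*x = y⁻¹*(g*x) := mul_assoc _ _ _
          _ = y⁻¹*(x⁻¹*g) := by rw [cgx']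
          _ = (y⁻¹*x⁻¹)*g := (mul_assoc _ _ _).symm
          _ = (x*y⁻¹)*g := by rw [h8]
          _ = x*(y⁻¹*g) := mul_assoc _ _ _
        · have l : (y⁻¹*g)*y = g := by rw [mul_assoc, hgy, ← mul_assoc, inv_mul_cancel, one_mul]
          have r : y*(y⁻¹*g) = g := by rw [← mul_assoc, mul_inv_cancel, one_mul]
          rw [l, r]
      · have cgy : g*y*g⁻¹ = y⁻¹ := (PF y g (fun hEq => hgy hEq.symm)).2.2.1
        have cgy' : g*y = y⁻¹*g := by
          calc g*y = (g*y*g⁻¹)*g := by group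
          _ = y⁻¹*g := by rw [cgy]
        refine ⟨⟨x*y, mul_mem hxH hyH⟩, ⟨(x*y)⁻¹*g, hcent _ ?_ ?_⟩, by group⟩
        · calc ((x*y)⁻¹*g)*x = (x*y)⁻¹*(g*x) := mul_assoc _ _ _
          _ = (x*y)⁻¹*(x⁻¹*g) := by rw [cgx']
          _ = ((x*y)⁻¹*x⁻¹)*g := (mul_assoc _ _ _).symm
          _ = (x*(x*y)⁻¹)*g := by rw [h9]
          _ = x*((x*y)⁻¹*g) := mul_assoc _ _ _
        · calc ((x*y)⁻¹*g)*y = (x*y)⁻¹*(g*y) := mul_assoc _ _ _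
          _ = (x*y)⁻¹*(y⁻¹*g) := by rw [cgy']
          _ = ((x*y)⁻¹*y⁻¹)*g := (mul_assoc _ _ _).symm
          _ = (y*(x*y)⁻¹)*g := by rw [h10]
          _ = y*((x*y)⁻¹*g) := mul_assoc _ _ _
  -- elements of H that are central are 1 or t
  have hHcent : ∀ z : G, z ∈ Subgroup.closure {x, y} → z ∈ Subgroup.center G →
      z = 1 ∨ z = t := by
    intro z hzH hzc
    exact central_in_closure hxy e hzH (Subgroup.mem_center_iff.mp hzc)
  -- the elementary abelian complement
  letI : CommGroup ↥(Subgroup.center G) := { (inferInstance : Group ↥(Subgroup.center G)) with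
    mul_comm := fun a b => Subtype.ext (Subgroup.mem_center_iff.mp b.2 a) }
  have hV2 : ∀ v : Additive ↥(Subgroup.center G), (2 : ℕ) • v = 0 := by
    intro v
    have h := hcsq ↑(Additive.toMul v) (Additive.toMul v).2
    rw [two_nsmul]
    exact Subtype.ext h
  letI : Module (ZMod 2) (Additive ↥(Subgroup.center G)) := AddCommGroup.zmodModule hV2
  set t' : Additive ↥(Subgroup.center G) :=
    Additive.ofMul (⟨t, htc⟩ : ↥(Subgroup.center G)) with ht'
  obtain ⟨W, hW⟩ := Submodule.exists_isCompl (Submodule.span (ZMod 2) {t'})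
  haveI : Module.Finite (ZMod 2) ↥W := Module.Finite.of_finite
  set d := Module.finrank (ZMod 2) ↥W with hd
  let b : Module.Basis (Fin d) (ZMod 2) ↥W := Module.finBasis _ _
  let eW : Multiplicative ↥W ≃* Multiplicative (Fin d → ZMod 2) :=
    AddEquiv.toMultiplicative b.equivFun.toAddEquiv
  let ι : Multiplicative ↥W →* G :=
    { toFun := fun w =>
        ((Additive.toMul (↑(Multiplicative.toAdd w) : Additive ↥(Subgroup.center G)) :
          ↥(Subgroup.center G)) : G),
      map_one' := rfl,
      map_mul' := fun a b => rfl }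
  have hι_mem : ∀ w, ι w ∈ Subgroup.center G :=
    fun w => (Additive.toMul (↑(Multiplicative.toAdd w) : Additive ↥(Subgroup.center G))).2
  have hι_inj : Function.Injective ι := fun a b hab =>
    Multiplicative.toAdd.injective (Subtype.val_injective
      (Additive.toMul.injective (Subtype.val_injective hab)))
  let φ : (↥(Subgroup.closure {x, y}) × Multiplicative ↥W) →* G :=
    MonoidHom.noncommCoprod (Subgroup.closure {x, y}).subtype ι
      (fun h w => (Subgroup.mem_center_iff.mp (hι_mem w) ↑h))
  have hφ_apply : ∀ (h : ↥(Subgroup.closure {x, y})) (w : Multiplicative ↥W),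
      φ (h, w) = ↑h * ι w := fun h w => rfl
  have hinj : Function.Injective φ := by
    rw [injective_iff_map_eq_one]
    rintro ⟨h, w⟩ hp1
    have hp' : (↑h : G) * ι w = 1 := by rw [← hφ_apply]; exact hp1
    have hhc : (↑h : G) ∈ Subgroup.center G := by
      have hEq : (↑h : G) = (ι w)⁻¹ := eq_inv_of_mul_eq_one_left hp'
      rw [hEq]
      exact (Subgroup.center G).inv_mem (hι_mem w)
    rcases hHcent ↑h h.2 hhc with h1 | h1
    · have hw1 : ι w = 1 := by rwa [h1, one_mul] at hp'
      have hw : w = 1 := hι_inj (by rw [hw1, map_one])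
      rw [Prod.ext_iff]
      exact ⟨Subtype.ext h1, hw⟩
    · exfalso
      have hwt : ι w = t := by
        have hEq : ι w = (↑h : G)⁻¹ := eq_inv_of_mul_eq_one_right hp'
        rw [hEq, h1]
        exact inv_eq_of_mul_eq_one_right ht_sq
      have hVeq : ((Multiplicative.toAdd w : ↥W) : Additive ↥(Subgroup.center G)) = t' :=
        Additive.toMul.injective (Subtype.ext hwt)
      have htW : t' ∈ W := hVeq ▸ (Multiplicative.toAdd w).2
      have ht0 : t' = 0 := (Submodule.disjoint_def.mp hW.disjoint) t'
        (Submodule.mem_span_singleton_self t') htW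
      apply ht1
      have : (⟨t, htc⟩ : ↥(Subgroup.center G)) = 1 := Additive.ofMul.injective ht0
      exact Subtype.ext_iff.mp this
  have hsurj : Function.Surjective φ := by
    intro g
    obtain ⟨h, z, rfl⟩ := hdec g
    have hzsup : Additive.ofMul z ∈ Submodule.span (ZMod 2) {t'} ⊔ W := by
      rw [hW.codisjoint.eq_top]; exact Submodule.mem_top
    rw [Submodule.mem_sup] at hzsup
    obtain ⟨l, hl, wv, hwv, hsum⟩ := hzsup
    rw [Submodule.mem_span_singleton] at hl
    obtain ⟨c, rfl⟩ := hl
    rcases (show ∀ c : ZMod 2, c = 0 ∨ c = 1 by decide) c with rfl | rfl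
    · have hz : Additive.toMul wv = z := by
        rw [zero_smul, zero_add] at hsum
        rw [hsum]
        rfl
      refine ⟨(h, Multiplicative.ofAdd ⟨wv, hwv⟩), ?_⟩
      rw [hφ_apply]
      congr 1
      show (↑(Additive.toMul wv) : G) = ↑z
      exact congrArg Subtype.val hz
    · have hz : (⟨t, htc⟩ : ↥(Subgroup.center G)) * Additive.toMul wv = z := by
        rw [one_smul] at hsum
        have h' := congrArg Additive.toMul hsum
        rw [toMul_add] at h'
        exact h'
      refine ⟨(h * ⟨t, htH⟩, Multiplicative.ofAdd ⟨wv, hwv⟩), ?_⟩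
      rw [hφ_apply]
      have hcz : (↑z : G) = t * ↑(Additive.toMul wv) := by
        rw [← hz]; rfl
      have hcoe : ((h * ⟨t, htH⟩ : ↥(Subgroup.closure {x, y})) : G) = ↑h * t := rfl
      rw [hcoe, hcz, mul_assoc]
      rfl
  exact ⟨d, ⟨(MulEquiv.ofBijective φ ⟨hinj, hsurj⟩).symm.trans (MulEquiv.prodCongr e eW)⟩⟩
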